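/- Let H₁ and H₂ be complex Hilbert spaces. The real linear span of the set of operators {a ⊗ b : a a self-adjoint Hilbert–Schmidt operator on H₁, b a self-adjoint Hilbert–Schmidt operator on H₂} is dense, with respect to the Hilbert–Schmidt norm, in the real Hilbert space of self-adjoint Hilbert–Schmidt operators on the Hilbert space tensor product H₁ ⊗ H₂. -/

import Mathlib

noncomputable section Stmt6Helpers

open scoped ComplexConjugate ENNReal
open Submodule Filter

local notation "⟪" x ", " y "⟫" => @inner ℂ _ _ x y

variable {E : Type*} [NormedAddCommGroup E] [InnerProductSpace ℂ E]

/-- rank-one operator `x ↦ ⟪v, x⟫ • u`. -/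
def stmt6rk (u v : E) : E →L[ℂ] E := (innerSL ℂ v).smulRight u

lemma stmt6rk_apply (u v x : E) : stmt6rk u v x = ⟪v, x⟫ • u := rfl

lemma stmt6_star_rk [CompleteSpace E] (u v : E) : star (stmt6rk u v) = stmt6rk v u := by
  rw [ContinuousLinearMap.star_eq_adjoint]
  symm
  rw [ContinuousLinearMap.eq_adjoint_iff]
  intro x y
  simp only [stmt6rk_apply, inner_smul_left, inner_smul_right, inner_conj_symm]
  ring

/-- Parseval. -/
lemma stmt6_parseval {κ : Type*} (b : HilbertBasis κ ℂ E) (x : E) :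
    HasSum (fun k => ‖⟪b k, x⟫‖ ^ 2) (‖x‖ ^ 2) := by
  have h := b.hasSum_inner_mul_inner x x
  have h2 : ∀ k, ⟪x, b k⟫ * ⟪b k, x⟫ = ((‖⟪b k, x⟫‖ ^ 2 : ℝ) : ℂ) := by
    intro k
    rw [← inner_conj_symm (b k) x, Complex.mul_conj']
    simp [norm_inner_symm x]
  rw [funext h2, inner_self_eq_norm_sq_to_K] at h
  rw [← Complex.hasSum_ofReal]
  simpa using h

lemma stmt6_parsevalE {κ : Type*} (b : HilbertBasis κ ℂ E) (x : E) :
    ∑' k, ENNReal.ofReal (‖⟪b k, x⟫‖ ^ 2) = ENNReal.ofReal (‖x‖ ^ 2) := by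
  rw [← ENNReal.ofReal_tsum_of_nonneg (fun _ => sq_nonneg _) (stmt6_parseval b x).summable,
    (stmt6_parseval b x).tsum_eq]

/-- Hilbert–Schmidt basis change. -/
lemma stmt6_basis_change {κ κ' : Type*} [CompleteSpace E] (b : HilbertBasis κ ℂ E)
    (b' : HilbertBasis κ' ℂ E) (A : E →L[ℂ] E) :
    ∑' k, ENNReal.ofReal (‖A (b k)‖ ^ 2)
      = ∑' l, ENNReal.ofReal (‖(star A : E →L[ℂ] E) (b' l)‖ ^ 2) := by
  have h1 : ∀ k, ENNReal.ofReal (‖A (b k)‖ ^ 2)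
      = ∑' l, ENNReal.ofReal (‖⟪b' l, A (b k)⟫‖ ^ 2) := fun k => (stmt6_parsevalE b' _).symm
  have h2 : ∀ l, ∑' k, ENNReal.ofReal (‖⟪b' l, A (b k)⟫‖ ^ 2)
      = ENNReal.ofReal (‖(star A : E →L[ℂ] E) (b' l)‖ ^ 2) := by
    intro l
    have h3 : ∀ k, ⟪b' l, A (b k)⟫ = ⟪(star A : E →L[ℂ] E) (b' l), b k⟫ := by
      intro k
      rw [ContinuousLinearMap.star_eq_adjoint, ContinuousLinearMap.adjoint_inner_left]
    calc ∑' k, ENNReal.ofReal (‖⟪b' l, A (b k)⟫‖ ^ 2)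
        = ∑' k, ENNReal.ofReal (‖⟪b k, (star A : E →L[ℂ] E) (b' l)⟫‖ ^ 2) := by
          refine tsum_congr fun k => ?_
          rw [h3 k, norm_inner_symm]
      _ = ENNReal.ofReal (‖(star A : E →L[ℂ] E) (b' l)‖ ^ 2) := stmt6_parsevalE b _
  calc ∑' k, ENNReal.ofReal (‖A (b k)‖ ^ 2)
      = ∑' k, ∑' l, ENNReal.ofReal (‖⟪b' l, A (b k)⟫‖ ^ 2) := tsum_congr h1
    _ = ∑' l, ∑' k, ENNReal.ofReal (‖⟪b' l, A (b k)⟫‖ ^ 2) := ENNReal.tsum_comm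
    _ = ∑' l, ENNReal.ofReal (‖(star A : E →L[ℂ] E) (b' l)‖ ^ 2) := tsum_congr h2

lemma stmt6_summable_iff {κ : Type*} (g : κ → ℝ) (hg : ∀ k, 0 ≤ g k) :
    (∑' k, ENNReal.ofReal (g k)) ≠ ⊤ ↔ Summable g := by
  rw [show (fun k => ENNReal.ofReal (g k)) = fun k => ((g k).toNNReal : ℝ≥0∞) from rfl,
    ENNReal.tsum_coe_ne_top_iff_summable]
  constructor
  · intro h
    have := NNReal.summable_coe.mpr h
    refine this.congr fun k => ?_
    exact Real.coe_toNNReal _ (hg k)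
  · intro h
    rw [← NNReal.summable_coe]
    refine h.congr fun k => ?_
    exact (Real.coe_toNNReal _ (hg k)).symm

lemma stmt6_summable_add {κ : Type*} {v : κ → E} (A B : E →L[ℂ] E)
    (hA : Summable fun i => ‖A (v i)‖ ^ 2) (hB : Summable fun i => ‖B (v i)‖ ^ 2) :
    Summable fun i => ‖(A + B) (v i)‖ ^ 2 := by
  refine Summable.of_nonneg_of_le (fun i => sq_nonneg _) (fun i => ?_)
    ((hA.add hB).mul_left 2)
  have h1 : ‖(A + B) (v i)‖ ≤ ‖A (v i)‖ + ‖B (v i)‖ := norm_add_le _ _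
  have h2 : ‖(A + B) (v i)‖ ^ 2 ≤ (‖A (v i)‖ + ‖B (v i)‖) ^ 2 :=
    pow_le_pow_left₀ (norm_nonneg _) h1 2
  nlinarith [sq_nonneg (‖A (v i)‖ - ‖B (v i)‖)]

lemma stmt6_summable_sub {κ : Type*} {v : κ → E} (A B : E →L[ℂ] E)
    (hA : Summable fun i => ‖A (v i)‖ ^ 2) (hB : Summable fun i => ‖B (v i)‖ ^ 2) :
    Summable fun i => ‖(A - B) (v i)‖ ^ 2 := by
  have := stmt6_summable_add A (-B) hA (by simpa using hB)
  simpa [sub_eq_add_neg] using this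

lemma stmt6_summable_smul {κ : Type*} {v : κ → E} (c : ℂ) (A : E →L[ℂ] E)
    (hA : Summable fun i => ‖A (v i)‖ ^ 2) :
    Summable fun i => ‖(c • A) (v i)‖ ^ 2 := by
  refine ((hA.mul_left (‖c‖ ^ 2)).congr fun i => ?_)
  simp [norm_smul, mul_pow]

lemma stmt6_summable_rk {κ : Type*} (b : HilbertBasis κ ℂ E) (u v : E) :
    Summable fun i => ‖stmt6rk u v (b i)‖ ^ 2 := by
  have h := (b.orthonormal.inner_products_summable (x := v)).mul_right (‖u‖ ^ 2)
  refine h.congr fun i => ?_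
  rw [stmt6rk_apply, norm_smul, mul_pow, norm_inner_symm]

end Stmt6Helpers

open scoped ENNReal ComplexConjugate in
set_option maxHeartbeats 2000000 in
theorem stmt6 (H₁ H₂ W : Type*)
    [NormedAddCommGroup H₁] [InnerProductSpace ℂ H₁] [CompleteSpace H₁]
    [NormedAddCommGroup H₂] [InnerProductSpace ℂ H₂] [CompleteSpace H₂]
    [NormedAddCommGroup W] [InnerProductSpace ℂ W] [CompleteSpace W]
    (t : H₁ →ₗ[ℂ] H₂ →ₗ[ℂ] W)
    (ht : ∀ (x₁ y₁ : H₁) (x₂ y₂ : H₂),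
      (inner ℂ (t x₁ x₂) (t y₁ y₂) : ℂ) = (inner ℂ x₁ y₁ : ℂ) * (inner ℂ x₂ y₂ : ℂ))
    (hdense : Dense (↑(Submodule.span ℂ {w : W | ∃ x y, w = t x y}) : Set W))
    (ι₁ ι₂ ι : Type*) (e₁ : HilbertBasis ι₁ ℂ H₁) (e₂ : HilbertBasis ι₂ ℂ H₂)
    (e : HilbertBasis ι ℂ W)
    (T : W →L[ℂ] W) (hT : IsSelfAdjoint T)
    (hTHS : Summable fun i : ι => ‖T (e i)‖ ^ 2)
    (ε : ℝ) (hε : 0 < ε) :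
    ∃ S : W →L[ℂ] W,
      S ∈ Submodule.span ℝ {X : W →L[ℂ] W |
        ∃ (a : H₁ →L[ℂ] H₁) (b : H₂ →L[ℂ] H₂),
          IsSelfAdjoint a ∧ IsSelfAdjoint b ∧
          (Summable fun i : ι₁ => ‖a (e₁ i)‖ ^ 2) ∧
          (Summable fun i : ι₂ => ‖b (e₂ i)‖ ^ 2) ∧
          ∀ x y, X (t x y) = t (a x) (b y)} ∧
      (Summable fun i : ι => ‖(T - S) (e i)‖ ^ 2) ∧
      (∑' i : ι, ‖(T - S) (e i)‖ ^ 2) < ε ^ 2 := by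
  classical
  set 𝒮 : Set (W →L[ℂ] W) := {X : W →L[ℂ] W |
        ∃ (a : H₁ →L[ℂ] H₁) (b : H₂ →L[ℂ] H₂),
          IsSelfAdjoint a ∧ IsSelfAdjoint b ∧
          (Summable fun i : ι₁ => ‖a (e₁ i)‖ ^ 2) ∧
          (Summable fun i : ι₂ => ‖b (e₂ i)‖ ^ 2) ∧
          ∀ x y, X (t x y) = t (a x) (b y)} with h𝒮def
  -- the product orthonormal family
  set f : ι₁ × ι₂ → W := fun p => t (e₁ p.1) (e₂ p.2) with hfdef
  have hip : ∀ p q : ι₁ × ι₂, (inner ℂ (f p) (f q) : ℂ) = if p = q then 1 else 0 := by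
    intro p q
    rw [hfdef]
    simp only []
    rw [ht]
    rw [orthonormal_iff_ite.mp e₁.orthonormal, orthonormal_iff_ite.mp e₂.orthonormal]
    by_cases h1 : p.1 = q.1 <;> by_cases h2 : p.2 = q.2 <;>
      simp [h1, h2, Prod.ext_iff]
  have hon : Orthonormal ℂ f := orthonormal_iff_ite.mpr hip
  have hnorm : ∀ (x : H₁) (y : H₂), ‖t x y‖ = ‖x‖ * ‖y‖ := by
    intro x y
    have h1 := ht x x y y
    rw [inner_self_eq_norm_sq_to_K, inner_self_eq_norm_sq_to_K,
      inner_self_eq_norm_sq_to_K] at h1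
    have h2 : ‖t x y‖ ^ 2 = ‖x‖ ^ 2 * ‖y‖ ^ 2 := by exact_mod_cast h1
    rw [← mul_pow] at h2
    have := congrArg Real.sqrt h2
    rwa [Real.sqrt_sq (norm_nonneg _),
      Real.sqrt_sq (by positivity)] at this
  have hsp : ⊤ ≤ (Submodule.span ℂ (Set.range f)).topologicalClosure := by
    have hsub : ∀ (x : H₁) (y : H₂),
        (t x y) ∈ closure (Submodule.span ℂ (Set.range f) : Set W) := by
      intro x y
      rw [Metric.mem_closure_iff]
      intro δ hδ
      have hd : (0 : ℝ) < ‖x‖ + ‖y‖ + 2 := by positivity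
      set δ' : ℝ := min 1 (δ / (‖x‖ + ‖y‖ + 2)) with hδ'def
      have hδ'pos : 0 < δ' := lt_min one_pos (div_pos hδ hd)
      have hδ'1 : δ' ≤ 1 := min_le_left _ _
      have hδ'le : δ' * (‖x‖ + ‖y‖ + 2) ≤ δ := by
        have h1 : δ' ≤ δ / (‖x‖ + ‖y‖ + 2) := min_le_right _ _
        calc δ' * (‖x‖ + ‖y‖ + 2) ≤ (δ / (‖x‖ + ‖y‖ + 2)) * (‖x‖ + ‖y‖ + 2) := by
              gcongr
          _ = δ := div_mul_cancel₀ _ hd.ne'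
      obtain ⟨s₁, hs₁⟩ := (Metric.tendsto_nhds.mp (e₁.hasSum_repr x) δ' hδ'pos).exists
      obtain ⟨s₂, hs₂⟩ := (Metric.tendsto_nhds.mp (e₂.hasSum_repr y) δ' hδ'pos).exists
      set x' : H₁ := ∑ i ∈ s₁, e₁.repr x i • e₁ i with hx'def
      set y' : H₂ := ∑ j ∈ s₂, e₂.repr y j • e₂ j with hy'def
      refine ⟨t x' y', ?_, ?_⟩
      · have hexp : t x' y' = ∑ i ∈ s₁, ∑ j ∈ s₂,
            (e₁.repr x i * e₂.repr y j) • f (i, j) := by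
          rw [hx'def, hy'def, map_sum t _ s₁, LinearMap.sum_apply]
          refine Finset.sum_congr rfl fun i _ => ?_
          rw [map_smul t, LinearMap.smul_apply, map_sum (t (e₁ i)) _ s₂, Finset.smul_sum]
          refine Finset.sum_congr rfl fun j _ => ?_
          rw [map_smul (t (e₁ i)), hfdef, smul_smul]
        rw [hexp]
        exact Submodule.sum_mem _ fun i _ => Submodule.sum_mem _ fun j _ =>
          Submodule.smul_mem _ _ (Submodule.subset_span ⟨(i, j), rfl⟩)
      · have hxd : ‖x - x'‖ < δ' := by
          have := hs₁
          rw [dist_eq_norm] at this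
          rw [← norm_neg]
          simpa [hx'def, neg_sub] using this
        have hyd : ‖y - y'‖ < δ' := by
          have := hs₂
          rw [dist_eq_norm] at this
          rw [← norm_neg]
          simpa [hy'def, neg_sub] using this
        have hx'n : ‖x'‖ ≤ ‖x‖ + δ' := by
          have h1 : ‖x'‖ - ‖x‖ ≤ ‖x' - x‖ := norm_sub_norm_le _ _
          have h2 : ‖x' - x‖ = ‖x - x'‖ := by rw [← norm_neg, neg_sub]
          linarith [hxd]
        have hsplit : t x y - t x' y' = t (x - x') y + t x' (y - y') := by
          rw [map_sub, LinearMap.sub_apply, map_sub]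
          abel
        rw [dist_eq_norm, hsplit]
        have hb1 : ‖t (x - x') y + t x' (y - y')‖ ≤ ‖x - x'‖ * ‖y‖ + ‖x'‖ * ‖y - y'‖ := by
          calc ‖t (x - x') y + t x' (y - y')‖ ≤ ‖t (x - x') y‖ + ‖t x' (y - y')‖ :=
                norm_add_le _ _
            _ = ‖x - x'‖ * ‖y‖ + ‖x'‖ * ‖y - y'‖ := by rw [hnorm, hnorm]
        have hy0 : (0 : ℝ) ≤ ‖y‖ := norm_nonneg _
        have hx0 : (0 : ℝ) ≤ ‖x‖ := norm_nonneg _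
        have ha0 : (0 : ℝ) ≤ ‖x - x'‖ := norm_nonneg _
        have hb0 : (0 : ℝ) ≤ ‖y - y'‖ := norm_nonneg _
        have hx'0 : (0 : ℝ) ≤ ‖x'‖ := norm_nonneg _
        nlinarith [mul_le_mul_of_nonneg_right hx'n hb0, mul_lt_mul_of_pos_left hyd
          (lt_of_le_of_lt (by linarith : (0:ℝ) ≤ ‖x‖ + δ') (lt_add_one _)),
          mul_le_mul_of_nonneg_right hxd.le hy0]
    have hsub' : Submodule.span ℂ {w : W | ∃ x y, w = t x y} ≤
        (Submodule.span ℂ (Set.range f)).topologicalClosure := by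
      rw [Submodule.span_le]
      rintro w ⟨x, y, rfl⟩
      show _ ∈ ((Submodule.span ℂ (Set.range f)).topologicalClosure : Set W)
      rw [Submodule.topologicalClosure_coe]
      exact hsub x y
    have h1 := Submodule.topologicalClosure_mono hsub'
    have h2 : (Submodule.span ℂ {w : W | ∃ x y, w = t x y}).topologicalClosure = ⊤ :=
      Submodule.dense_iff_topologicalClosure_eq_top.mp hdense
    rw [h2] at h1
    exact h1.trans (Submodule.topologicalClosure_minimal _ le_rfl
      (Submodule.isClosed_topologicalClosure _))
  set bf : HilbertBasis (ι₁ × ι₂) ℂ W := HilbertBasis.mk hon hsp with hbfdef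
  have hbf : ∀ p, bf p = f p := fun p => congrFun (HilbertBasis.coe_mk hon hsp) p
  have hsymm : ∀ x y : W, (inner ℂ (T x) y : ℂ) = inner ℂ x (T y) :=
    (ContinuousLinearMap.isSelfAdjoint_iff_isSymmetric.mp hT)
  -- total HS mass of T in the product basis
  have htot : (∑' p : ι₁ × ι₂, ENNReal.ofReal (‖T (f p)‖ ^ 2)) ≠ ⊤ := by
    have h1 := stmt6_basis_change bf e T
    simp only [hbf, hT.star_eq] at h1
    rw [h1, ← ENNReal.ofReal_tsum_of_nonneg (fun _ => sq_nonneg _) hTHS]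
    exact ENNReal.ofReal_ne_top
  -- choose the cutoff
  have hhalfpos : (0 : ℝ≥0∞) < ENNReal.ofReal (ε ^ 2) / 2 :=
    ENNReal.div_pos (ENNReal.ofReal_pos.mpr (pow_pos hε 2)).ne' (by norm_num)
  obtain ⟨F, hF⟩ := (((ENNReal.tendsto_tsum_compl_atTop_zero htot).eventually
    (gt_mem_nhds hhalfpos)).exists)
  -- the truncated operator
  set c : ι₁ × ι₂ → ι₁ × ι₂ → ℂ := fun p q => inner ℂ (f p) (T (f q)) with hcdef
  have hherm : ∀ p q, (starRingEnd ℂ) (c p q) = c q p := by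
    intro p q
    rw [hcdef]
    simp only []
    rw [← hsymm, inner_conj_symm]
  set S : W →L[ℂ] W := ∑ p ∈ F, ∑ q ∈ F, c p q • stmt6rk (f p) (f q) with hSdef
  -- Membership of S in the span
  have hSmem : S ∈ Submodule.span ℝ 𝒮 := by
    have hmem𝒮 : ∀ (a : H₁ →L[ℂ] H₁) (b : H₂ →L[ℂ] H₂) (X : W →L[ℂ] W),
        IsSelfAdjoint a → IsSelfAdjoint b → (Summable fun i : ι₁ => ‖a (e₁ i)‖ ^ 2) →
        (Summable fun i : ι₂ => ‖b (e₂ i)‖ ^ 2) → (∀ x y, X (t x y) = t (a x) (b y)) →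
        X ∈ 𝒮 := by
      intro a b X ha hb hsa hsb hX
      rw [h𝒮def]
      exact ⟨a, b, ha, hb, hsa, hsb, hX⟩
    have hR : ∀ (x₁ y₁ : H₁) (x₂ y₂ : H₂) (x : H₁) (y : H₂),
        stmt6rk (t x₁ x₂) (t y₁ y₂) (t x y) = t (stmt6rk x₁ y₁ x) (stmt6rk x₂ y₂ y) := by
      intro x₁ y₁ x₂ y₂ x y
      rw [stmt6rk_apply, ht, stmt6rk_apply, stmt6rk_apply, map_smul t,
        LinearMap.smul_apply, map_smul (t x₁), smul_smul]
    have hkey : ∀ (u₁ v₁ : H₁) (u₂ v₂ : H₂) (γ : ℂ),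
        γ • stmt6rk (t u₁ u₂) (t v₁ v₂) + (starRingEnd ℂ) γ • stmt6rk (t v₁ v₂) (t u₁ u₂)
          ∈ Submodule.span ℝ 𝒮 := by
      intro u₁ v₁ u₂ v₂ γ
      set A : H₁ →L[ℂ] H₁ := stmt6rk u₁ v₁ with hA
      set A' : H₁ →L[ℂ] H₁ := stmt6rk v₁ u₁ with hA'
      set B : H₂ →L[ℂ] H₂ := stmt6rk u₂ v₂ with hB
      set B' : H₂ →L[ℂ] H₂ := stmt6rk v₂ u₂ with hB'
      set R₁ : W →L[ℂ] W := stmt6rk (t u₁ u₂) (t v₁ v₂) with hR₁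
      set R₂ : W →L[ℂ] W := stmt6rk (t u₁ v₂) (t v₁ u₂) with hR₂
      set R₃ : W →L[ℂ] W := stmt6rk (t v₁ u₂) (t u₁ v₂) with hR₃
      set R₄ : W →L[ℂ] W := stmt6rk (t v₁ v₂) (t u₁ u₂) with hR₄
      set a₁ : H₁ →L[ℂ] H₁ := A + A' with ha₁
      set a₂ : H₁ →L[ℂ] H₁ := Complex.I • (A' - A) with ha₂
      set b₁ : H₂ →L[ℂ] H₂ := B + B' with hb₁
      set b₂ : H₂ →L[ℂ] H₂ := Complex.I • (B' - B) with hb₂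
      set X₁ : W →L[ℂ] W := R₁ + R₂ + R₃ + R₄ with hX₁
      set X₂ : W →L[ℂ] W := -(R₁ - R₂ - R₃ + R₄) with hX₂
      set X₃ : W →L[ℂ] W := Complex.I • (R₂ - R₁ + R₄ - R₃) with hX₃
      set X₄ : W →L[ℂ] W := Complex.I • (R₃ + R₄ - R₁ - R₂) with hX₄
      -- self-adjointness of witnesses
      have ha₁sa : IsSelfAdjoint a₁ := by
        rw [IsSelfAdjoint, ha₁, star_add, hA, hA', stmt6_star_rk, stmt6_star_rk, add_comm]
      have hb₁sa : IsSelfAdjoint b₁ := by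
        rw [IsSelfAdjoint, hb₁, star_add, hB, hB', stmt6_star_rk, stmt6_star_rk, add_comm]
      have ha₂sa : IsSelfAdjoint a₂ := by
        rw [IsSelfAdjoint, ha₂, star_smul, star_sub, hA, hA', stmt6_star_rk, stmt6_star_rk]
        rw [show (star Complex.I : ℂ) = -Complex.I from by simp [Complex.star_def]]
        module
      have hb₂sa : IsSelfAdjoint b₂ := by
        rw [IsSelfAdjoint, hb₂, star_smul, star_sub, hB, hB', stmt6_star_rk, stmt6_star_rk]
        rw [show (star Complex.I : ℂ) = -Complex.I from by simp [Complex.star_def]]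
        module
      -- Hilbert–Schmidt conditions
      have ha₁hs : Summable fun i : ι₁ => ‖a₁ (e₁ i)‖ ^ 2 := by
        rw [ha₁, hA, hA']
        exact stmt6_summable_add _ _ (stmt6_summable_rk e₁ u₁ v₁) (stmt6_summable_rk e₁ v₁ u₁)
      have hb₁hs : Summable fun i : ι₂ => ‖b₁ (e₂ i)‖ ^ 2 := by
        rw [hb₁, hB, hB']
        exact stmt6_summable_add _ _ (stmt6_summable_rk e₂ u₂ v₂) (stmt6_summable_rk e₂ v₂ u₂)
      have ha₂hs : Summable fun i : ι₁ => ‖a₂ (e₁ i)‖ ^ 2 := by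
        rw [ha₂, hA, hA']
        exact stmt6_summable_smul _ _ (stmt6_summable_sub _ _
          (stmt6_summable_rk e₁ v₁ u₁) (stmt6_summable_rk e₁ u₁ v₁))
      have hb₂hs : Summable fun i : ι₂ => ‖b₂ (e₂ i)‖ ^ 2 := by
        rw [hb₂, hB, hB']
        exact stmt6_summable_smul _ _ (stmt6_summable_sub _ _
          (stmt6_summable_rk e₂ v₂ u₂) (stmt6_summable_rk e₂ u₂ v₂))
      -- the intertwining properties
      have hprop₁ : ∀ x y, X₁ (t x y) = t (a₁ x) (b₁ y) := by
        intro x y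
        rw [hX₁, ha₁, hb₁]
        simp only [ContinuousLinearMap.add_apply, hR₁, hR₂, hR₃, hR₄, hA, hA', hB, hB', hR]
        simp only [map_add, LinearMap.add_apply]
        module
      have hprop₂ : ∀ x y, X₂ (t x y) = t (a₂ x) (b₂ y) := by
        intro x y
        rw [hX₂, ha₂, hb₂]
        simp only [ContinuousLinearMap.neg_apply, ContinuousLinearMap.sub_apply,
          ContinuousLinearMap.add_apply, ContinuousLinearMap.smul_apply, hR₁, hR₂, hR₃, hR₄, hA, hA', hB, hB', hR]
        simp only [map_add, map_sub, map_smul, LinearMap.add_apply, LinearMap.sub_apply,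
          LinearMap.smul_apply]
        match_scalars <;> (apply Complex.ext <;>
          simp [Complex.mul_re, Complex.mul_im] <;> ring)
      have hprop₃ : ∀ x y, X₃ (t x y) = t (a₁ x) (b₂ y) := by
        intro x y
        rw [hX₃, ha₁, hb₂]
        simp only [ContinuousLinearMap.neg_apply, ContinuousLinearMap.sub_apply,
          ContinuousLinearMap.add_apply, ContinuousLinearMap.smul_apply, hR₁, hR₂, hR₃, hR₄, hA, hA', hB, hB', hR]
        simp only [map_add, map_sub, map_smul, LinearMap.add_apply, LinearMap.sub_apply,
          LinearMap.smul_apply]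
        match_scalars <;> (apply Complex.ext <;>
          simp [Complex.mul_re, Complex.mul_im] <;> ring)
      have hprop₄ : ∀ x y, X₄ (t x y) = t (a₂ x) (b₁ y) := by
        intro x y
        rw [hX₄, ha₂, hb₁]
        simp only [ContinuousLinearMap.neg_apply, ContinuousLinearMap.sub_apply,
          ContinuousLinearMap.add_apply, ContinuousLinearMap.smul_apply, hR₁, hR₂, hR₃, hR₄, hA, hA', hB, hB', hR]
        simp only [map_add, map_sub, map_smul, LinearMap.add_apply, LinearMap.sub_apply,
          LinearMap.smul_apply]
        match_scalars <;> (apply Complex.ext <;>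
          simp [Complex.mul_re, Complex.mul_im] <;> ring)
      -- memberships
      have hX₁mem : X₁ ∈ 𝒮 := hmem𝒮 a₁ b₁ X₁ ha₁sa hb₁sa ha₁hs hb₁hs hprop₁
      have hX₂mem : X₂ ∈ 𝒮 := hmem𝒮 a₂ b₂ X₂ ha₂sa hb₂sa ha₂hs hb₂hs hprop₂
      have hX₃mem : X₃ ∈ 𝒮 := hmem𝒮 a₁ b₂ X₃ ha₁sa hb₂sa ha₁hs hb₂hs hprop₃
      have hX₄mem : X₄ ∈ 𝒮 := hmem𝒮 a₂ b₁ X₄ ha₂sa hb₁sa ha₂hs hb₁hs hprop₄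
      -- the combination identity
      have hcomb : γ • R₁ + (starRingEnd ℂ) γ • R₄
          = (γ.re / 2) • X₁ + (-(γ.re / 2)) • X₂ + (-(γ.im / 2)) • X₃
            + (-(γ.im / 2)) • X₄ := by
        have hsm : ∀ (r : ℝ) (X : W →L[ℂ] W), r • X = ((r : ℂ)) • X := fun r X => by
          rw [← algebraMap_smul ℂ r X]
          norm_num
        rw [hsm, hsm, hsm, hsm, hX₁, hX₂, hX₃, hX₄]
        have hγc : (starRingEnd ℂ) γ = (γ.re : ℂ) - (γ.im : ℂ) * Complex.I := by
          apply Complex.ext <;> simp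
        have hγ : γ = (γ.re : ℂ) + (γ.im : ℂ) * Complex.I := (Complex.re_add_im γ).symm
        rw [hγc]
        nth_rewrite 1 [hγ]
        match_scalars <;> (apply Complex.ext <;>
          simp [Complex.mul_re, Complex.mul_im] <;> ring)
      rw [hcomb]
      exact Submodule.add_mem _ (Submodule.add_mem _ (Submodule.add_mem _
        (Submodule.smul_mem _ _ (Submodule.subset_span hX₁mem))
        (Submodule.smul_mem _ _ (Submodule.subset_span hX₂mem)))
        (Submodule.smul_mem _ _ (Submodule.subset_span hX₃mem)))
        (Submodule.smul_mem _ _ (Submodule.subset_span hX₄mem))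
    -- split S into hermitian pairs
    have h2 : ∑ p ∈ F, ∑ q ∈ F, (starRingEnd ℂ) (c p q / 2) • stmt6rk (f q) (f p)
        = ∑ p ∈ F, ∑ q ∈ F, (c p q / 2) • stmt6rk (f p) (f q) := by
      rw [Finset.sum_comm]
      refine Finset.sum_congr rfl fun p _ => Finset.sum_congr rfl fun q _ => ?_
      congr 1
      rw [map_div₀, hherm, map_ofNat]
    have hsplit : S = ∑ p ∈ F, ∑ q ∈ F,
        ((c p q / 2) • stmt6rk (f p) (f q)
          + (starRingEnd ℂ) (c p q / 2) • stmt6rk (f q) (f p)) := by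
      rw [hSdef]
      rw [Finset.sum_congr rfl fun (p : ι₁ × ι₂) _ => Finset.sum_add_distrib
        (f := fun q => (c p q / 2) • stmt6rk (f p) (f q))
        (g := fun q => (starRingEnd ℂ) (c p q / 2) • stmt6rk (f q) (f p)),
        Finset.sum_add_distrib, h2, ← Finset.sum_add_distrib]
      refine Finset.sum_congr rfl fun p _ => ?_
      rw [← Finset.sum_add_distrib]
      refine Finset.sum_congr rfl fun q _ => ?_
      rw [← add_smul, add_halves]
    rw [hsplit]
    exact Submodule.sum_mem _ fun p _ => Submodule.sum_mem _ fun q _ =>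
      hkey (e₁ p.1) (e₁ q.1) (e₂ p.2) (e₂ q.2) (c p q / 2)
  -- star S = S
  have hstarS : star S = S := by
    have h1 : star S = ∑ p ∈ F, ∑ q ∈ F, (starRingEnd ℂ) (c p q) • stmt6rk (f q) (f p) := by
      rw [hSdef, star_sum]
      refine Finset.sum_congr rfl fun p _ => ?_
      rw [star_sum]
      refine Finset.sum_congr rfl fun q _ => ?_
      rw [star_smul, stmt6_star_rk]
      rfl
    rw [h1, Finset.sum_comm]
    rw [hSdef]
    refine Finset.sum_congr rfl fun p _ => Finset.sum_congr rfl fun q _ => ?_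
    rw [hherm]
  -- computation of S on the basis
  have hSap : ∀ r, S (f r) = if r ∈ F then ∑ p ∈ F, c p r • f p else 0 := by
    intro r
    rw [hSdef, ContinuousLinearMap.sum_apply]
    by_cases hr : r ∈ F
    · rw [if_pos hr]
      refine Finset.sum_congr rfl fun p _ => ?_
      rw [ContinuousLinearMap.sum_apply]
      have h1 : ∀ q ∈ F, (c p q • stmt6rk (f p) (f q)) (f r)
          = if q = r then c p r • f p else 0 := by
        intro q _
        rw [ContinuousLinearMap.smul_apply, stmt6rk_apply, hip]
        by_cases hqr : q = r <;> simp [hqr]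
      rw [Finset.sum_congr rfl h1, Finset.sum_ite_eq' F r (fun _ => c p r • f p)]
      simp [hr]
    · rw [if_neg hr]
      refine Finset.sum_eq_zero fun p _ => ?_
      rw [ContinuousLinearMap.sum_apply]
      refine Finset.sum_eq_zero fun q hq => ?_
      rw [ContinuousLinearMap.smul_apply, stmt6rk_apply, hip]
      have hqr : q ≠ r := fun h => hr (h ▸ hq)
      simp [hqr]
  -- the estimate
  have hstarTS : star (T - S) = T - S := by rw [star_sub, hT.star_eq, hstarS]
  have hmain : (∑' i : ι, ENNReal.ofReal (‖(T - S) (e i)‖ ^ 2)) < ENNReal.ofReal (ε ^ 2) := by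
    have hchange : (∑' i : ι, ENNReal.ofReal (‖(T - S) (e i)‖ ^ 2))
        = ∑' p : ι₁ × ι₂, ENNReal.ofReal (‖(T - S) (f p)‖ ^ 2) := by
      rw [stmt6_basis_change e bf (T - S)]
      refine tsum_congr fun p => ?_
      rw [hstarTS, hbf p]
    set τ : ℝ≥0∞ := ∑' q : ι₁ × ι₂,
      if q ∈ F then 0 else ENNReal.ofReal (‖T (f q)‖ ^ 2) with hτdef
    have hτeq : τ = ∑' (x : {x : ι₁ × ι₂ // x ∉ F}), ENNReal.ofReal (‖T (f ↑x)‖ ^ 2) := by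
      rw [hτdef]
      have h1 := tsum_subtype {x : ι₁ × ι₂ | x ∉ F}
        (fun q => ENNReal.ofReal (‖T (f q)‖ ^ 2))
      refine Eq.trans ?_ h1.symm
      refine tsum_congr fun q => ?_
      by_cases hq : q ∈ F <;> simp [Set.indicator_apply, hq]
    have hτlt : τ < ENNReal.ofReal (ε ^ 2) / 2 := by rw [hτeq]; exact hF
    have hSin : ∀ p ∈ F, ENNReal.ofReal (‖(T - S) (f p)‖ ^ 2)
        = ∑' q : ι₁ × ι₂, if q ∈ F then 0 else ENNReal.ofReal (‖c q p‖ ^ 2) := by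
      intro p hp
      have hz : ∀ q : ι₁ × ι₂, (inner ℂ (f q) ((T - S) (f p)) : ℂ)
          = if q ∈ F then 0 else c q p := by
        intro q
        rw [ContinuousLinearMap.sub_apply, inner_sub_right, hSap p, if_pos hp, inner_sum]
        have h2 : ∀ p' ∈ F, (inner ℂ (f q) (c p' p • f p') : ℂ)
            = if p' = q then c q p else 0 := by
          intro p' _
          rw [inner_smul_right, hip]
          by_cases h : q = p'
          · simp [h, if_pos rfl]
          · have h' : p' ≠ q := fun hh => h hh.symm
            simp [h, h']
        rw [Finset.sum_congr rfl h2, Finset.sum_ite_eq' F q (fun _ => c q p)]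
        by_cases hq : q ∈ F <;> simp [hq, hcdef]
      rw [← stmt6_parsevalE bf ((T - S) (f p))]
      refine tsum_congr fun q => ?_
      rw [hbf q, hz q]
      by_cases hq : q ∈ F <;> simp [hq]
    have hS0 : ∀ p, p ∉ F → (T - S) (f p) = T (f p) := by
      intro p hp
      rw [ContinuousLinearMap.sub_apply, hSap p, if_neg hp, sub_zero]
    set g : ι₁ × ι₂ → ℝ≥0∞ := fun p => ∑' q : ι₁ × ι₂,
      if q ∈ F then 0 else ENNReal.ofReal (‖c q p‖ ^ 2) with hgdef
    have hpoint : ∀ p, ENNReal.ofReal (‖(T - S) (f p)‖ ^ 2)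
        = (if p ∈ F then g p else 0)
          + (if p ∈ F then 0 else ENNReal.ofReal (‖T (f p)‖ ^ 2)) := by
      intro p
      by_cases hp : p ∈ F
      · rw [if_pos hp, if_pos hp, add_zero, hSin p hp, hgdef]
      · rw [if_neg hp, if_neg hp, zero_add, hS0 p hp]
    have hcol : ∀ q : ι₁ × ι₂, (∑' p : ι₁ × ι₂, ENNReal.ofReal (‖c q p‖ ^ 2))
        = ENNReal.ofReal (‖T (f q)‖ ^ 2) := by
      intro q
      have h1 : ∀ p : ι₁ × ι₂, ‖c q p‖ = ‖(inner ℂ (f p) (T (f q)) : ℂ)‖ := by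
        intro p
        rw [hcdef]
        simp only []
        rw [← hsymm, norm_inner_symm]
      calc (∑' p : ι₁ × ι₂, ENNReal.ofReal (‖c q p‖ ^ 2))
          = ∑' p : ι₁ × ι₂, ENNReal.ofReal (‖(inner ℂ (bf p) (T (f q)) : ℂ)‖ ^ 2) := by
            refine tsum_congr fun p => ?_
            rw [h1 p, hbf p]
        _ = ENNReal.ofReal (‖T (f q)‖ ^ 2) := stmt6_parsevalE bf _
    have hpartA : (∑' p : ι₁ × ι₂, if p ∈ F then g p else 0) ≤ τ := by
      have h1 : (∑' p : ι₁ × ι₂, if p ∈ F then g p else 0) = ∑ p ∈ F, g p := by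
        rw [tsum_eq_sum (s := F) (f := fun p => if p ∈ F then g p else 0)
          (fun b hb => by simp [hb])]
        exact Finset.sum_congr rfl fun p hp => by simp [hp]
      rw [h1]
      calc ∑ p ∈ F, g p ≤ ∑' p : ι₁ × ι₂, g p := ENNReal.sum_le_tsum F
        _ = ∑' q : ι₁ × ι₂, ∑' p : ι₁ × ι₂,
            (if q ∈ F then 0 else ENNReal.ofReal (‖c q p‖ ^ 2)) := by
            rw [hgdef]
            exact ENNReal.tsum_comm
        _ = τ := by
            rw [hτdef]
            refine tsum_congr fun q => ?_
            by_cases hq : q ∈ F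
            · simp [hq]
            · simp only [if_neg hq]
              exact hcol q
    have htotal : (∑' p : ι₁ × ι₂, ENNReal.ofReal (‖(T - S) (f p)‖ ^ 2)) ≤ τ + τ := by
      calc (∑' p : ι₁ × ι₂, ENNReal.ofReal (‖(T - S) (f p)‖ ^ 2))
          = ∑' p : ι₁ × ι₂, ((if p ∈ F then g p else 0)
              + (if p ∈ F then 0 else ENNReal.ofReal (‖T (f p)‖ ^ 2))) := tsum_congr hpoint
        _ = (∑' p : ι₁ × ι₂, if p ∈ F then g p else 0)
              + ∑' p : ι₁ × ι₂, (if p ∈ F then 0 else ENNReal.ofReal (‖T (f p)‖ ^ 2)) :=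
            ENNReal.tsum_add
        _ ≤ τ + τ := add_le_add hpartA (le_of_eq (by rw [hτdef]))
    rw [hchange]
    refine lt_of_le_of_lt htotal ?_
    calc τ + τ < ENNReal.ofReal (ε ^ 2) / 2 + ENNReal.ofReal (ε ^ 2) / 2 :=
          ENNReal.add_lt_add hτlt hτlt
      _ = ENNReal.ofReal (ε ^ 2) := ENNReal.add_halves _
  have hne : (∑' i : ι, ENNReal.ofReal (‖(T - S) (e i)‖ ^ 2)) ≠ ⊤ :=
    (hmain.trans ENNReal.ofReal_lt_top).ne
  have hsummable : Summable fun i : ι => ‖(T - S) (e i)‖ ^ 2 :=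
    (stmt6_summable_iff _ (fun i => sq_nonneg _)).mp hne
  refine ⟨S, hSmem, hsummable, ?_⟩
  rw [← ENNReal.ofReal_lt_ofReal_iff (pow_pos hε 2),
    ENNReal.ofReal_tsum_of_nonneg (fun i => sq_nonneg _) hsummable]
  exact hmain
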